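/- The map Σ ↦ Σ Cᵀ (C Σ Cᵀ + R)⁻¹ C Σ, defined on the cone of symmetric positive definite n×n matrices, is convex with respect to the Loewner order: for Σ₁, Σ₂ positive definite and t ∈ [0,1], f(tΣ₁ + (1−t)Σ₂) ⪯ t f(Σ₁) + (1−t) f(Σ₂). -/

import Mathlib

open Matrix

private lemma psd_smul {k : Type*} [Fintype k] {A : Matrix k k ℝ} (hA : A.PosSemidef)
    {t : ℝ} (ht : 0 ≤ t) : (t • A).PosSemidef := by
  constructor
  · unfold Matrix.IsHermitian
    rw [conjTranspose_smul, hA.1]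
    simp
  · intro x
    exact (hA.smul ht).2 x

/-- The Kalman-update map `Σ ↦ Σ Cᵀ (C Σ Cᵀ + R)⁻¹ C Σ` is convex on positive
definite matrices with respect to the Loewner order. -/
theorem kalman_update_convex
    {n m : ℕ} (C : Matrix (Fin m) (Fin n) ℝ) (R : Matrix (Fin m) (Fin m) ℝ)
    (hR : R.PosDef)
    (f : Matrix (Fin n) (Fin n) ℝ → Matrix (Fin n) (Fin n) ℝ)
    (hf : ∀ S, f S = S * Cᵀ * (C * S * Cᵀ + R)⁻¹ * (C * S))
    (S₁ S₂ : Matrix (Fin n) (Fin n) ℝ) (hS₁ : S₁.PosDef) (hS₂ : S₂.PosDef)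
    (t : ℝ) (ht0 : 0 ≤ t) (ht1 : t ≤ 1) :
    (t • f S₁ + (1 - t) • f S₂ - f (t • S₁ + (1 - t) • S₂)).PosSemidef := by
  have ht1' : (0:ℝ) ≤ 1 - t := by linarith
  set St := t • S₁ + (1 - t) • S₂ with hSt
  -- M S := C S Cᵀ + R is PosDef for PSD S
  have hM : ∀ S : Matrix (Fin n) (Fin n) ℝ, S.PosSemidef → (C * S * Cᵀ + R).PosDef := by
    intro S hS
    have h1 : (C * S * Cᵀ).PosSemidef := by
      have := hS.mul_mul_conjTranspose_same C
      simpa [conjTranspose_eq_transpose_of_trivial] using this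
    exact Matrix.PosDef.posSemidef_add h1 hR
  have hCt : Cᴴ = Cᵀ := by
    ext i j; simp [conjTranspose]
  -- each block matrix is PSD
  have key : ∀ (S : Matrix (Fin n) (Fin n) ℝ), S.PosDef →
      (fromBlocks (C * S * Cᵀ + R) (C * S) (C * S)ᴴ (f S)).PosSemidef := by
    intro S hS
    have hMS := hM S hS.posSemidef
    haveI : Invertible (C * S * Cᵀ + R) :=
      invertibleOfIsUnitDet _ hMS.det_pos.ne'.isUnit
    rw [PosDef.fromBlocks₁₁ _ _ hMS]
    have : f S - (C * S)ᴴ * (C * S * Cᵀ + R)⁻¹ * (C * S) = 0 := by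
      rw [hf S, conjTranspose_mul, hCt, hS.isHermitian.eq, sub_self]
    rw [this]
    exact PosSemidef.zero
  have hB : (fromBlocks (C * St * Cᵀ + R) (C * St) (C * St)ᴴ
      (t • f S₁ + (1 - t) • f S₂)).PosSemidef := by
    have h1 := psd_smul (key S₁ hS₁) ht0
    have h2 := psd_smul (key S₂ hS₂) ht1'
    have := h1.add h2
    convert this using 1
    rw [Matrix.fromBlocks_smul, Matrix.fromBlocks_smul, fromBlocks_add, Matrix.fromBlocks_inj]
    refine ⟨?_, ?_, ?_, ?_⟩ <;>
      simp only [hSt, conjTranspose_add, conjTranspose_smul, conjTranspose_mul, hCt,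
        hS₁.isHermitian.eq, hS₂.isHermitian.eq, Matrix.mul_add, Matrix.add_mul,
        Matrix.mul_smul, Matrix.smul_mul, star_trivial] <;>
      module
  have hStpsd : St.PosSemidef :=
    (psd_smul hS₁.posSemidef ht0).add (psd_smul hS₂.posSemidef ht1')
  have hMt := hM St hStpsd
  haveI : Invertible (C * St * Cᵀ + R) :=
    invertibleOfIsUnitDet _ hMt.det_pos.ne'.isUnit
  rw [PosDef.fromBlocks₁₁ _ _ hMt] at hB
  have heq : (C * St)ᴴ * (C * St * Cᵀ + R)⁻¹ * (C * St) = f St := by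
    rw [hf St, conjTranspose_mul, hCt, hStpsd.isHermitian.eq]
  rw [heq] at hB
  exact hB
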